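/- Let Ω = {1, …, d} with d ≥ 2 and let f : 2^Ω → ℝ be a submodular set function with |f(S)| ≤ M for every S ⊆ Ω. Then its multilinear extension F : [0,1]^d → ℝ is (4M√(d(d−1)))-smooth: F is differentiable on [0,1]^d and ‖∇F(x) − ∇F(y)‖ ≤ 4M√(d(d−1))·‖x − y‖ for all x, y ∈ [0,1]^d. -/

import Mathlib

open Finset

/-- The multilinear extension of a set function `f : 2^{[d]} → ℝ`:
`F(x) = Σ_{S ⊆ [d]} f(S) · Π_{i ∈ S} x_i · Π_{j ∉ S} (1 − x_j)`. -/
noncomputable def multilinearExt {d : ℕ} (f : Finset (Fin d) → ℝ)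
    (x : EuclideanSpace ℝ (Fin d)) : ℝ :=
  ∑ S : Finset (Fin d), f S * (∏ i ∈ S, x i) * ∏ j ∈ Sᶜ, (1 - x j)

noncomputable section
namespace MLS
variable {d : ℕ}

/-- single factor -/
def hfac (S : Finset (Fin d)) (x : EuclideanSpace ℝ (Fin d)) (j : Fin d) : ℝ :=
  if j ∈ S then x j else 1 - x j

lemma hfac_of_mem {S : Finset (Fin d)} {j : Fin d} (h : j ∈ S) (x : EuclideanSpace ℝ (Fin d)) :
    hfac S x j = x j := if_pos h

lemma hfac_of_not_mem {S : Finset (Fin d)} {j : Fin d} (h : j ∉ S) (x : EuclideanSpace ℝ (Fin d)) :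
    hfac S x j = 1 - x j := if_neg h

lemma hfac_insert {S : Finset (Fin d)} {a j : Fin d} (h : j ≠ a) (x : EuclideanSpace ℝ (Fin d)) :
    hfac (insert a S) x j = hfac S x j := by
  simp [hfac, mem_insert, h]

lemma hfac_nonneg {S : Finset (Fin d)} {x : EuclideanSpace ℝ (Fin d)}
    (hx : ∀ i, x i ∈ Set.Icc (0:ℝ) 1) (j : Fin d) : 0 ≤ hfac S x j := by
  unfold hfac; split_ifs
  · exact (hx j).1
  · linarith [(hx j).2]

lemma sum_prod_one (s : Finset (Fin d)) (y : EuclideanSpace ℝ (Fin d)) :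
    ∑ S ∈ s.powerset, ∏ j ∈ s, hfac S y j = 1 := by
  classical
  induction s using Finset.induction_on with
  | empty => simp
  | insert a s ha ih =>
    rw [Finset.sum_powerset_insert ha]
    have h1 : ∀ S ∈ s.powerset, ∏ j ∈ insert a s, hfac S y j
        = (1 - y a) * ∏ j ∈ s, hfac S y j := by
      intro S hS
      rw [Finset.prod_insert ha, hfac_of_not_mem (fun h => ha (mem_powerset.mp hS h))]
    have h2 : ∀ S ∈ s.powerset, ∏ j ∈ insert a s, hfac (insert a S) y j
        = y a * ∏ j ∈ s, hfac S y j := by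
      intro S hS
      rw [Finset.prod_insert ha, hfac_of_mem (mem_insert_self a S)]
      congr 1
      exact Finset.prod_congr rfl fun j hj => hfac_insert (by rintro rfl; exact ha hj) y
    rw [Finset.sum_congr rfl h1, Finset.sum_congr rfl h2, ← Finset.mul_sum, ← Finset.mul_sum, ih]
    ring


lemma abs_mul_sub {c c' p p' : ℝ} (hc : 0 ≤ c) (hp' : 0 ≤ p') :
    |c * p - c' * p'| ≤ c * |p - p'| + |c - c'| * p' := by
  have h : c * p - c' * p' = c * (p - p') + (c - c') * p' := by ring
  rw [h]
  refine (abs_add_le _ _).trans ?_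
  rw [abs_mul, abs_mul, abs_of_nonneg hc, abs_of_nonneg hp']

lemma key (s : Finset (Fin d)) (x y : EuclideanSpace ℝ (Fin d))
    (hx : ∀ i, x i ∈ Set.Icc (0:ℝ) 1) (hy : ∀ i, y i ∈ Set.Icc (0:ℝ) 1) :
    ∑ S ∈ s.powerset, |(∏ j ∈ s, hfac S x j) - ∏ j ∈ s, hfac S y j|
      ≤ 2 * ∑ l ∈ s, |x l - y l| := by
  classical
  induction s using Finset.induction_on with
  | empty => simp
  | insert a s ha ih =>
    rw [Finset.sum_powerset_insert ha]
    have hPy : ∀ S : Finset (Fin d), 0 ≤ ∏ j ∈ s, hfac S y j :=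
      fun S => Finset.prod_nonneg fun j _ => hfac_nonneg hy j
    have hb1 : ∀ S ∈ s.powerset,
        |(∏ j ∈ insert a s, hfac S x j) - ∏ j ∈ insert a s, hfac S y j|
          ≤ (1 - x a) * |(∏ j ∈ s, hfac S x j) - ∏ j ∈ s, hfac S y j|
            + |x a - y a| * ∏ j ∈ s, hfac S y j := by
      intro S hS
      have hna : a ∉ S := fun h => ha (mem_powerset.mp hS h)
      rw [Finset.prod_insert ha, Finset.prod_insert ha, hfac_of_not_mem hna,
        hfac_of_not_mem hna]
      have := abs_mul_sub (c := 1 - x a) (c' := 1 - y a)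
        (p := ∏ j ∈ s, hfac S x j) (p' := ∏ j ∈ s, hfac S y j)
        (by linarith [(hx a).2]) (hPy S)
      calc _ ≤ (1 - x a) * |(∏ j ∈ s, hfac S x j) - ∏ j ∈ s, hfac S y j|
            + |(1 - x a) - (1 - y a)| * ∏ j ∈ s, hfac S y j := this
        _ = _ := by rw [show (1 - x a) - (1 - y a) = -(x a - y a) by ring, abs_neg]
    have hb2 : ∀ S ∈ s.powerset,
        |(∏ j ∈ insert a s, hfac (insert a S) x j) - ∏ j ∈ insert a s, hfac (insert a S) y j|
          ≤ x a * |(∏ j ∈ s, hfac S x j) - ∏ j ∈ s, hfac S y j|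
            + |x a - y a| * ∏ j ∈ s, hfac S y j := by
      intro S hS
      have hps : ∀ z : EuclideanSpace ℝ (Fin d),
          ∏ j ∈ s, hfac (insert a S) z j = ∏ j ∈ s, hfac S z j :=
        fun z => Finset.prod_congr rfl fun j hj => hfac_insert (by rintro rfl; exact ha hj) z
      rw [Finset.prod_insert ha, Finset.prod_insert ha, hfac_of_mem (mem_insert_self a S),
        hfac_of_mem (mem_insert_self a S), hps, hps]
      exact abs_mul_sub (hx a).1 (hPy S)
    calc ∑ S ∈ s.powerset, |(∏ j ∈ insert a s, hfac S x j) - ∏ j ∈ insert a s, hfac S y j|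
          + ∑ S ∈ s.powerset,
            |(∏ j ∈ insert a s, hfac (insert a S) x j) - ∏ j ∈ insert a s, hfac (insert a S) y j|
        ≤ (∑ S ∈ s.powerset, ((1 - x a) * |(∏ j ∈ s, hfac S x j) - ∏ j ∈ s, hfac S y j|
            + |x a - y a| * ∏ j ∈ s, hfac S y j))
          + ∑ S ∈ s.powerset, (x a * |(∏ j ∈ s, hfac S x j) - ∏ j ∈ s, hfac S y j|
            + |x a - y a| * ∏ j ∈ s, hfac S y j) :=
        add_le_add (Finset.sum_le_sum hb1) (Finset.sum_le_sum hb2)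
      _ = (∑ S ∈ s.powerset, |(∏ j ∈ s, hfac S x j) - ∏ j ∈ s, hfac S y j|)
          + 2 * |x a - y a| := by
        rw [Finset.sum_add_distrib, Finset.sum_add_distrib]
        simp only [← Finset.mul_sum]
        rw [sum_prod_one]
        ring
      _ ≤ 2 * ∑ l ∈ s, |x l - y l| + 2 * |x a - y a| := by linarith
      _ = 2 * ∑ l ∈ insert a s, |x l - y l| := by rw [Finset.sum_insert ha]; ring


def gvec (f : Finset (Fin d) → ℝ) (x : EuclideanSpace ℝ (Fin d)) :
    EuclideanSpace ℝ (Fin d) :=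
  WithLp.toLp 2 (fun i => ∑ S ∈ (univ.erase i).powerset,
    (f (insert i S) - f S) * ∏ j ∈ univ.erase i, hfac S x j)

lemma ml_eq (f : Finset (Fin d) → ℝ) (x : EuclideanSpace ℝ (Fin d)) :
    multilinearExt f x = ∑ S : Finset (Fin d), f S * ∏ j : Fin d, hfac S x j := by
  unfold multilinearExt
  refine Finset.sum_congr rfl fun S _ => ?_
  have h1 : ∏ i ∈ S, x i = ∏ i ∈ S, hfac S x i :=
    Finset.prod_congr rfl fun i hi => (hfac_of_mem hi x).symm
  have h2 : ∏ j ∈ Sᶜ, (1 - x j) = ∏ j ∈ Sᶜ, hfac S x j :=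
    Finset.prod_congr rfl fun j hj => (hfac_of_not_mem (mem_compl.mp hj) x).symm
  rw [mul_assoc, h1, h2, Finset.prod_mul_prod_compl]

def cfac (S : Finset (Fin d)) (i : Fin d) : EuclideanSpace ℝ (Fin d) →L[ℝ] ℝ :=
  if i ∈ S then EuclideanSpace.proj i else -EuclideanSpace.proj i

lemma cfac_apply (S : Finset (Fin d)) (i : Fin d) (v : EuclideanSpace ℝ (Fin d)) :
    cfac S i v = if i ∈ S then v i else -(v i) := by
  unfold cfac; split_ifs <;> simp

lemma hasFDerivAt_hfac (S : Finset (Fin d)) (j : Fin d) (x : EuclideanSpace ℝ (Fin d)) :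
    HasFDerivAt (fun x : EuclideanSpace ℝ (Fin d) => hfac S x j) (cfac S j) x := by
  unfold hfac cfac
  split_ifs with h
  · exact (EuclideanSpace.proj (𝕜 := ℝ) j).hasFDerivAt
  · exact ((EuclideanSpace.proj (𝕜 := ℝ) j).hasFDerivAt).const_sub 1

lemma sum_finset_split (i : Fin d) (T : Finset (Fin d) → ℝ) :
    ∑ S : Finset (Fin d), T S
      = ∑ S ∈ (univ.erase i).powerset, (T S + T (insert i S)) := by
  rw [Finset.sum_add_distrib,
    ← Finset.sum_powerset_insert (notMem_erase i univ),
    insert_erase (mem_univ i), Finset.powerset_univ]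

lemma hasGradientAt_ml (f : Finset (Fin d) → ℝ) (x : EuclideanSpace ℝ (Fin d)) :
    HasGradientAt (multilinearExt f) (gvec f x) x := by
  rw [hasGradientAt_iff_hasFDerivAt]
  have hml : multilinearExt f = fun x => ∑ S : Finset (Fin d),
      f S * ∏ j : Fin d, hfac S x j := funext (ml_eq f)
  rw [hml]
  have hterm : ∀ S ∈ (univ : Finset (Finset (Fin d))),
      HasFDerivAt (fun x : EuclideanSpace ℝ (Fin d) => f S * ∏ j : Fin d, hfac S x j)
        (f S • ∑ i : Fin d, (∏ j ∈ univ.erase i, hfac S x j) • cfac S i) x := by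
    intro S _
    exact (HasFDerivAt.finset_prod (fun j _ => hasFDerivAt_hfac S j x)).const_mul (f S)
  have hsum := HasFDerivAt.fun_sum hterm
  refine hsum.congr_fderiv ?_
  apply ContinuousLinearMap.ext
  intro v
  simp only [ContinuousLinearMap.sum_apply, ContinuousLinearMap.smul_apply,
    InnerProductSpace.toDual_apply_apply, PiLp.inner_apply, RCLike.inner_apply, conj_trivial,
    cfac_apply, smul_eq_mul]
  simp only [Finset.mul_sum]
  rw [Finset.sum_comm]
  refine Finset.sum_congr rfl fun i _ => ?_
  rw [sum_finset_split i (fun S => f S * ((∏ j ∈ univ.erase i, hfac S x j) *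
    (if i ∈ S then v i else -(v i))))]
  rw [mul_comm (v i)]
  show _ = gvec f x i * v i
  unfold gvec
  simp only [PiLp.toLp_apply]
  rw [Finset.sum_mul]
  refine Finset.sum_congr rfl fun S hS => ?_
  have hiS : i ∉ S := fun h => (notMem_erase i univ) (mem_powerset.mp hS h)
  have hQ : ∏ j ∈ univ.erase i, hfac (insert i S) x j = ∏ j ∈ univ.erase i, hfac S x j :=
    Finset.prod_congr rfl fun j hj => hfac_insert (ne_of_mem_erase hj) x
  rw [if_neg hiS, if_pos (mem_insert_self i S), hQ]
  ring

lemma gvec_lip (f : Finset (Fin d) → ℝ) (M : ℝ)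
    (hbound : ∀ S : Finset (Fin d), |f S| ≤ M)
    (x y : EuclideanSpace ℝ (Fin d))
    (hx : ∀ i, x i ∈ Set.Icc (0:ℝ) 1) (hy : ∀ i, y i ∈ Set.Icc (0:ℝ) 1) (i : Fin d) :
    |gvec f x i - gvec f y i| ≤ 4 * M * ∑ l ∈ univ.erase i, |x l - y l| := by
  have hM : 0 ≤ M := le_trans (abs_nonneg _) (hbound ∅)
  unfold gvec
  simp only [PiLp.toLp_apply]
  rw [← Finset.sum_sub_distrib]
  calc |∑ S ∈ (univ.erase i).powerset,
        ((f (insert i S) - f S) * ∏ j ∈ univ.erase i, hfac S x j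
          - (f (insert i S) - f S) * ∏ j ∈ univ.erase i, hfac S y j)|
      ≤ ∑ S ∈ (univ.erase i).powerset,
        |(f (insert i S) - f S) * ∏ j ∈ univ.erase i, hfac S x j
          - (f (insert i S) - f S) * ∏ j ∈ univ.erase i, hfac S y j| :=
        Finset.abs_sum_le_sum_abs _ _
    _ ≤ ∑ S ∈ (univ.erase i).powerset,
        (2 * M) * |(∏ j ∈ univ.erase i, hfac S x j) - ∏ j ∈ univ.erase i, hfac S y j| := by
        refine Finset.sum_le_sum fun S _ => ?_
        rw [← mul_sub, abs_mul]
        refine mul_le_mul_of_nonneg_right ?_ (abs_nonneg _)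
        calc |f (insert i S) - f S| ≤ |f (insert i S)| + |f S| := abs_sub _ _
          _ ≤ 2 * M := by linarith [hbound (insert i S), hbound S]
    _ = (2 * M) * ∑ S ∈ (univ.erase i).powerset,
        |(∏ j ∈ univ.erase i, hfac S x j) - ∏ j ∈ univ.erase i, hfac S y j| :=
        (Finset.mul_sum _ _ _).symm
    _ ≤ (2 * M) * (2 * ∑ l ∈ univ.erase i, |x l - y l|) := by
        refine mul_le_mul_of_nonneg_left (key _ x y hx hy) (by linarith)
    _ = 4 * M * ∑ l ∈ univ.erase i, |x l - y l| := by ring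

end MLS

theorem multilinear_extension_smooth
    (d : ℕ) (hd : 2 ≤ d) (f : Finset (Fin d) → ℝ) (M : ℝ)
    (hsub : ∀ A B : Finset (Fin d), A ⊆ B → ∀ x ∉ B,
      f (insert x B) - f B ≤ f (insert x A) - f A)
    (hbound : ∀ S : Finset (Fin d), |f S| ≤ M) :
    Differentiable ℝ (multilinearExt f) ∧
    ∀ x y : EuclideanSpace ℝ (Fin d),
      (∀ i, x i ∈ Set.Icc (0 : ℝ) 1) → (∀ i, y i ∈ Set.Icc (0 : ℝ) 1) →
      ‖gradient (multilinearExt f) x - gradient (multilinearExt f) y‖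
        ≤ 4 * M * Real.sqrt (d * (d - 1)) * ‖x - y‖ := by
  have hM : 0 ≤ M := le_trans (abs_nonneg _) (hbound ∅)
  have hd1 : (1:ℝ) ≤ (d:ℝ) := by exact_mod_cast Nat.one_le_of_lt hd
  constructor
  · exact fun x => (MLS.hasGradientAt_ml f x).hasFDerivAt.differentiableAt
  · intro x y hx hy
    rw [(MLS.hasGradientAt_ml f x).gradient, (MLS.hasGradientAt_ml f y).gradient,
      EuclideanSpace.norm_eq, EuclideanSpace.norm_eq]
    simp only [PiLp.sub_apply, Real.norm_eq_abs, sq_abs]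
    set B := ∑ i : Fin d, (x i - y i)^2 with hB
    have hBnn : 0 ≤ B := Finset.sum_nonneg fun i _ => sq_nonneg _
    have hsq : ∀ i : Fin d,
        (MLS.gvec f x i - MLS.gvec f y i)^2 ≤ 16 * M^2 * ((d:ℝ) - 1) * B := by
      intro i
      have hcard : (((univ : Finset (Fin d)).erase i).card : ℝ) = (d:ℝ) - 1 := by
        rw [Finset.card_erase_of_mem (mem_univ i), card_univ, Fintype.card_fin]
        have : 1 ≤ d := Nat.one_le_of_lt hd
        push_cast [this]
        ring
      calc (MLS.gvec f x i - MLS.gvec f y i)^2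
          = |MLS.gvec f x i - MLS.gvec f y i|^2 := (sq_abs _).symm
        _ ≤ (4 * M * ∑ l ∈ univ.erase i, |x l - y l|)^2 :=
            pow_le_pow_left₀ (abs_nonneg _) (MLS.gvec_lip f M hbound x y hx hy i) 2
        _ = 16 * M^2 * (∑ l ∈ univ.erase i, |x l - y l|)^2 := by ring
        _ ≤ 16 * M^2 * ((((univ : Finset (Fin d)).erase i).card : ℝ)
              * ∑ l ∈ univ.erase i, |x l - y l|^2) := by
            refine mul_le_mul_of_nonneg_left ?_ (by positivity)
            exact sq_sum_le_card_mul_sum_sq (s := univ.erase i) (f := fun l => |x l - y l|)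
        _ ≤ 16 * M^2 * (((d:ℝ) - 1) * B) := by
            rw [hcard]
            refine mul_le_mul_of_nonneg_left (mul_le_mul_of_nonneg_left ?_ (by linarith))
              (by positivity)
            simp only [sq_abs]
            exact Finset.sum_le_sum_of_subset_of_nonneg (Finset.subset_univ _)
              (fun l _ _ => sq_nonneg _)
        _ = 16 * M^2 * ((d:ℝ) - 1) * B := by ring
    have hA : ∑ i : Fin d, (MLS.gvec f x i - MLS.gvec f y i)^2
        ≤ 16 * M^2 * ((d:ℝ) * ((d:ℝ) - 1)) * B := by
      calc ∑ i : Fin d, (MLS.gvec f x i - MLS.gvec f y i)^2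
          ≤ ∑ _i : Fin d, 16 * M^2 * ((d:ℝ) - 1) * B := Finset.sum_le_sum fun i _ => hsq i
        _ = (d:ℝ) * (16 * M^2 * ((d:ℝ) - 1) * B) := by
            rw [Finset.sum_const, card_univ, Fintype.card_fin, nsmul_eq_mul]
        _ = 16 * M^2 * ((d:ℝ) * ((d:ℝ) - 1)) * B := by ring
    have hC : (0:ℝ) ≤ (d:ℝ) * ((d:ℝ) - 1) := by nlinarith
    calc Real.sqrt (∑ i : Fin d, (MLS.gvec f x i - MLS.gvec f y i)^2)
        ≤ Real.sqrt (16 * M^2 * ((d:ℝ) * ((d:ℝ) - 1)) * B) := Real.sqrt_le_sqrt hA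
      _ = Real.sqrt ((4 * M * Real.sqrt ((d:ℝ) * ((d:ℝ) - 1)))^2 * B) := by
          congr 1
          rw [mul_pow, mul_pow, Real.sq_sqrt hC]
          ring
      _ = 4 * M * Real.sqrt ((d:ℝ) * ((d:ℝ) - 1)) * Real.sqrt B := by
          rw [Real.sqrt_mul (sq_nonneg _), Real.sqrt_sq (by positivity)]

end
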